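/- Let Φ be the set of pairs (p, q) ∈ (0,1)² (representing binary quantizer output distributions f_φ^0(0)=p, f_φ^1(0)=q, p ≠ q). If K ⊂ (0,1)² is a compact convex set with finitely many extreme points, and G(p,q) = c0/D(p,q) + c1/D(q,p) for nonnegative c0, c1, then min over K of G is attained at an extreme point of K. -/

import Mathlib

open Real Set intervalIntegral

noncomputable section

namespace Stmt17

/-- Binary KL divergence. -/
def Dkl (p q : ℝ) : ℝ :=
  p * Real.log (p / q) + (1 - p) * Real.log ((1 - p) / (1 - q))

/-- Weighted integral of `1/(s(1-s))` along the segment from `a` to `b`. -/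
def Jw (ρ : ℝ → ℝ) (a b : ℝ) : ℝ :=
  ∫ r in (0:ℝ)..1, ρ r / ((a + r * (b - a)) * (1 - (a + r * (b - a))))

lemma s_bounds {a b r : ℝ} (ha : 0 < a) (hab : a < b) (hb : b < 1)
    (hr : r ∈ Icc (0:ℝ) 1) :
    0 < a + r * (b - a) ∧ a + r * (b - a) < 1 := by
  obtain ⟨hr0, hr1⟩ := hr
  constructor <;> nlinarith

lemma g_pos {a b r : ℝ} (ha : 0 < a) (hab : a < b) (hb : b < 1)
    (hr : r ∈ Icc (0:ℝ) 1) :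
    0 < (a + r * (b - a)) * (1 - (a + r * (b - a))) := by
  obtain ⟨h1, h2⟩ := s_bounds ha hab hb hr
  nlinarith

lemma integrand_contOn {ρ : ℝ → ℝ} (hρc : Continuous ρ) {a b : ℝ}
    (ha : 0 < a) (hab : a < b) (hb : b < 1) :
    ContinuousOn (fun r => ρ r / ((a + r * (b - a)) * (1 - (a + r * (b - a)))))
      (Icc (0:ℝ) 1) := by
  apply ContinuousOn.div hρc.continuousOn
  · fun_prop
  · intro r hr
    exact (g_pos ha hab hb hr).ne'

lemma integrand_intble {ρ : ℝ → ℝ} (hρc : Continuous ρ) {a b : ℝ}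
    (ha : 0 < a) (hab : a < b) (hb : b < 1) :
    IntervalIntegrable
      (fun r => ρ r / ((a + r * (b - a)) * (1 - (a + r * (b - a)))))
      MeasureTheory.volume 0 1 := by
  apply ContinuousOn.intervalIntegrable
  rw [uIcc_of_le (by norm_num : (0:ℝ) ≤ 1)]
  exact integrand_contOn hρc ha hab hb

lemma Jw_pos {ρ : ℝ → ℝ} (hρc : Continuous ρ)
    (hρpos : ∀ r ∈ Ioo (0:ℝ) 1, 0 < ρ r) {a b : ℝ}
    (ha : 0 < a) (hab : a < b) (hb : b < 1) :
    0 < Jw ρ a b := by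
  apply intervalIntegral_pos_of_pos_on (integrand_intble hρc ha hab hb)
  · intro r hr
    exact div_pos (hρpos r hr) (g_pos ha hab hb (Ioo_subset_Icc_self hr))
  · norm_num


/-- FTC identity for weight `1 - r`: `Dkl b a = (b-a)^2 * Jw (1-·) a b`. -/
lemma Dkl_eq_Jw_one_sub {a b : ℝ} (ha : 0 < a) (hab : a < b) (hb : b < 1) :
    Dkl b a = (b - a)^2 * Jw (fun r => 1 - r) a b := by
  have hd : 0 < b - a := by linarith
  set F : ℝ → ℝ := fun r =>
    (b / (b - a)^2) * Real.log (a + r * (b - a)) +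
    ((1 - b) / (b - a)^2) * Real.log (1 - (a + r * (b - a))) with hF
  have key : ∀ r ∈ uIcc (0:ℝ) 1,
      HasDerivAt F ((1 - r) / ((a + r * (b - a)) * (1 - (a + r * (b - a))))) r := by
    intro r hr
    rw [uIcc_of_le (by norm_num : (0:ℝ) ≤ 1)] at hr
    obtain ⟨hs0, hs1⟩ := s_bounds ha hab hb hr
    have haff : HasDerivAt (fun r : ℝ => a + r * (b - a)) (b - a) r := by
      simpa using ((hasDerivAt_id r).mul_const (b - a)).const_add a
    have h1 : HasDerivAt (fun r : ℝ => Real.log (a + r * (b - a)))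
        ((a + r * (b - a))⁻¹ * (b - a)) r :=
      by have := (Real.hasDerivAt_log hs0.ne').comp r haff; exact this
    have haff2 : HasDerivAt (fun r : ℝ => 1 - (a + r * (b - a))) (-(b - a)) r := by
      have := (hasDerivAt_const r (1:ℝ)).sub haff; rw [zero_sub] at this; exact this
    have h2 : HasDerivAt (fun r : ℝ => Real.log (1 - (a + r * (b - a))))
        ((1 - (a + r * (b - a)))⁻¹ * (-(b - a))) r := by
      have hne : (1 - (a + r * (b - a))) ≠ 0 := by linarith
      exact (Real.hasDerivAt_log hne).comp r haff2
    have := ((h1.const_mul (b / (b - a)^2)).add (h2.const_mul ((1 - b) / (b - a)^2)))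
    refine this.congr_deriv ?_
    have hs0' : (a + r * (b - a)) ≠ 0 := hs0.ne'
    have hs1' : (1 - (a + r * (b - a))) ≠ 0 := by linarith
    have hdne : (b - a) ≠ 0 := hd.ne'
    generalize hsdef : a + r * (b - a) = s at hs0' hs1' ⊢
    field_simp
    rw [← hsdef]
    ring
  have hρc : Continuous (fun r : ℝ => 1 - r) := by fun_prop
  have hint := integrand_intble hρc ha hab hb
  have heval : Jw (fun r => 1 - r) a b = F 1 - F 0 :=
    integral_eq_sub_of_hasDerivAt key hint
  rw [heval]
  have ha' : a ≠ 0 := ha.ne'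
  have hb' : b ≠ 0 := (lt_trans ha hab).ne'
  have h1a : (1 - a) ≠ 0 := by linarith
  have h1b : (1 - b) ≠ 0 := by linarith
  have hd' : (b - a) ≠ 0 := hd.ne'
  simp only [hF, Dkl]
  rw [Real.log_div hb' ha', Real.log_div h1b h1a]
  field_simp
  ring


/-- FTC identity for weight `r`: `Dkl a b = (b-a)^2 * Jw id a b`. -/
lemma Dkl_eq_Jw_id {a b : ℝ} (ha : 0 < a) (hab : a < b) (hb : b < 1) :
    Dkl a b = (b - a)^2 * Jw (fun r => r) a b := by
  have hd : 0 < b - a := by linarith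
  set F : ℝ → ℝ := fun r =>
    -((a / (b - a)^2) * Real.log (a + r * (b - a))) -
    ((1 - a) / (b - a)^2) * Real.log (1 - (a + r * (b - a))) with hF
  have key : ∀ r ∈ uIcc (0:ℝ) 1,
      HasDerivAt F (r / ((a + r * (b - a)) * (1 - (a + r * (b - a))))) r := by
    intro r hr
    rw [uIcc_of_le (by norm_num : (0:ℝ) ≤ 1)] at hr
    obtain ⟨hs0, hs1⟩ := s_bounds ha hab hb hr
    have haff : HasDerivAt (fun r : ℝ => a + r * (b - a)) (b - a) r := by
      simpa using ((hasDerivAt_id r).mul_const (b - a)).const_add a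
    have h1 : HasDerivAt (fun r : ℝ => Real.log (a + r * (b - a)))
        ((a + r * (b - a))⁻¹ * (b - a)) r :=
      by have := (Real.hasDerivAt_log hs0.ne').comp r haff; exact this
    have haff2 : HasDerivAt (fun r : ℝ => 1 - (a + r * (b - a))) (-(b - a)) r := by
      have := (hasDerivAt_const r (1:ℝ)).sub haff; rw [zero_sub] at this; exact this
    have h2 : HasDerivAt (fun r : ℝ => Real.log (1 - (a + r * (b - a))))
        ((1 - (a + r * (b - a)))⁻¹ * (-(b - a))) r := by
      have hne : (1 - (a + r * (b - a))) ≠ 0 := by linarith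
      exact (Real.hasDerivAt_log hne).comp r haff2
    have := ((h1.const_mul (a / (b - a)^2)).neg.sub
      (h2.const_mul ((1 - a) / (b - a)^2)))
    refine this.congr_deriv ?_
    have hs0' : (a + r * (b - a)) ≠ 0 := hs0.ne'
    have hs1' : (1 - (a + r * (b - a))) ≠ 0 := by linarith
    have hdne : (b - a) ≠ 0 := hd.ne'
    generalize hsdef : a + r * (b - a) = s at hs0' hs1' ⊢
    field_simp
    rw [← hsdef]
    ring
  have hρc : Continuous (fun r : ℝ => r) := by fun_prop
  have hint := integrand_intble hρc ha hab hb
  have heval : Jw (fun r => r) a b = F 1 - F 0 :=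
    integral_eq_sub_of_hasDerivAt key hint
  rw [heval]
  have ha' : a ≠ 0 := ha.ne'
  have hb' : b ≠ 0 := (lt_trans ha hab).ne'
  have h1a : (1 - a) ≠ 0 := by linarith
  have h1b : (1 - b) ≠ 0 := by linarith
  have hd' : (b - a) ≠ 0 := hd.ne'
  simp only [hF, Dkl]
  rw [Real.log_div ha' hb', Real.log_div h1a h1b]
  field_simp
  ring


lemma cs2 {Y Z t : ℝ} (hY : 0 < Y) (hZ : 0 < Z) :
    (1:ℝ) / (Y + Z) ≤ t^2 / Y + (1 - t)^2 / Z := by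
  rw [div_add_div _ _ hY.ne' hZ.ne', div_le_div_iff₀ (by linarith) (by positivity)]
  nlinarith [sq_nonneg (t * Z - (1 - t) * Y), mul_pos hY hZ]

lemma gconc {s₁ s₂ l m : ℝ} (hl : 0 ≤ l) (hm : 0 ≤ m) (hlm : l + m = 1) :
    l * (s₁ * (1 - s₁)) + m * (s₂ * (1 - s₂)) ≤
      (l * s₁ + m * s₂) * (1 - (l * s₁ + m * s₂)) := by
  have hm' : m = 1 - l := by linarith
  have key : (l * s₁ + m * s₂) * (1 - (l * s₁ + m * s₂)) -
      (l * (s₁ * (1 - s₁)) + m * (s₂ * (1 - s₂))) = l * m * (s₁ - s₂)^2 := by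
    rw [hm']; ring
  nlinarith [mul_nonneg (mul_nonneg hl hm) (sq_nonneg (s₁ - s₂))]

set_option maxHeartbeats 1000000 in
/-- Concavity of the harmonic mean `1 / Jw`. -/
lemma Jw_harm {ρ : ℝ → ℝ} (hρc : Continuous ρ)
    (hρ0 : ∀ r ∈ Icc (0:ℝ) 1, 0 ≤ ρ r)
    (hρpos : ∀ r ∈ Ioo (0:ℝ) 1, 0 < ρ r)
    {a₁ b₁ a₂ b₂ l m : ℝ}
    (ha₁ : 0 < a₁) (hab₁ : a₁ < b₁) (hb₁ : b₁ < 1)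
    (ha₂ : 0 < a₂) (hab₂ : a₂ < b₂) (hb₂ : b₂ < 1)
    (hl : 0 ≤ l) (hm : 0 ≤ m) (hlm : l + m = 1) :
    l / Jw ρ a₁ b₁ + m / Jw ρ a₂ b₂ ≤
      1 / Jw ρ (l * a₁ + m * a₂) (l * b₁ + m * b₂) := by
  rcases eq_or_lt_of_le hl with hl0 | hlpos
  · have hm1 : m = 1 := by linarith
    simp [← hl0, hm1]
  rcases eq_or_lt_of_le hm with hm0 | hmpos
  · have hl1 : l = 1 := by linarith
    simp [← hm0, hl1]
  -- mixture point in region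
  have ha₃ : 0 < l * a₁ + m * a₂ := by nlinarith
  have hab₃ : l * a₁ + m * a₂ < l * b₁ + m * b₂ := by nlinarith
  have hb₃ : l * b₁ + m * b₂ < 1 := by nlinarith
  set A := Jw ρ a₁ b₁ with hA
  set B := Jw ρ a₂ b₂ with hB
  set M := Jw ρ (l * a₁ + m * a₂) (l * b₁ + m * b₂) with hM
  have hApos : 0 < A := Jw_pos hρc hρpos ha₁ hab₁ hb₁
  have hBpos : 0 < B := Jw_pos hρc hρpos ha₂ hab₂ hb₂
  have hMpos : 0 < M := Jw_pos hρc hρpos ha₃ hab₃ hb₃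
  set θ := l * B / (l * B + m * A) with hθ
  have hden : 0 < l * B + m * A := by positivity
  -- pointwise inequality
  have hpt : ∀ r ∈ Icc (0:ℝ) 1,
      ρ r / ((l * a₁ + m * a₂ + r * (l * b₁ + m * b₂ - (l * a₁ + m * a₂))) *
        (1 - (l * a₁ + m * a₂ + r * (l * b₁ + m * b₂ - (l * a₁ + m * a₂))))) ≤
      (θ^2 / l) * (ρ r / ((a₁ + r * (b₁ - a₁)) * (1 - (a₁ + r * (b₁ - a₁))))) +
      ((1 - θ)^2 / m) * (ρ r / ((a₂ + r * (b₂ - a₂)) * (1 - (a₂ + r * (b₂ - a₂))))) := by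
    intro r hr
    set s₁ := a₁ + r * (b₁ - a₁)
    set s₂ := a₂ + r * (b₂ - a₂)
    have hg₁ : 0 < s₁ * (1 - s₁) := g_pos ha₁ hab₁ hb₁ hr
    have hg₂ : 0 < s₂ * (1 - s₂) := g_pos ha₂ hab₂ hb₂ hr
    have hg₃ : 0 < (l * a₁ + m * a₂ + r * (l * b₁ + m * b₂ - (l * a₁ + m * a₂))) *
        (1 - (l * a₁ + m * a₂ + r * (l * b₁ + m * b₂ - (l * a₁ + m * a₂)))) :=
      g_pos ha₃ hab₃ hb₃ hr
    have hs₃ : l * a₁ + m * a₂ + r * (l * b₁ + m * b₂ - (l * a₁ + m * a₂)) =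
        l * s₁ + m * s₂ := by simp only [s₁, s₂]; ring
    have hconc := gconc (s₁ := s₁) (s₂ := s₂) hl hm hlm
    have hYZ : 0 < l * (s₁ * (1 - s₁)) := by positivity
    have hZ : 0 < m * (s₂ * (1 - s₂)) := by positivity
    have hρr : 0 ≤ ρ r := hρ0 r hr
    -- step 1: denominator monotonicity
    have step1 : ρ r / ((l * s₁ + m * s₂) * (1 - (l * s₁ + m * s₂))) ≤
        ρ r / (l * (s₁ * (1 - s₁)) + m * (s₂ * (1 - s₂))) := by
      gcongr
    -- step 2: pointwise Cauchy-Schwarz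
    have step2 : (1:ℝ) / (l * (s₁ * (1 - s₁)) + m * (s₂ * (1 - s₂))) ≤
        θ^2 / (l * (s₁ * (1 - s₁))) + (1 - θ)^2 / (m * (s₂ * (1 - s₂))) :=
      cs2 hYZ hZ
    have step2' : ρ r / (l * (s₁ * (1 - s₁)) + m * (s₂ * (1 - s₂))) ≤
        (θ^2 / l) * (ρ r / (s₁ * (1 - s₁))) + ((1 - θ)^2 / m) * (ρ r / (s₂ * (1 - s₂))) := by
      have h := mul_le_mul_of_nonneg_left step2 hρr
      have e1 : ρ r * ((1:ℝ) / (l * (s₁ * (1 - s₁)) + m * (s₂ * (1 - s₂)))) =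
          ρ r / (l * (s₁ * (1 - s₁)) + m * (s₂ * (1 - s₂))) := by ring
      have e2 : ρ r * (θ^2 / (l * (s₁ * (1 - s₁))) + (1 - θ)^2 / (m * (s₂ * (1 - s₂)))) =
          (θ^2 / l) * (ρ r / (s₁ * (1 - s₁))) + ((1 - θ)^2 / m) * (ρ r / (s₂ * (1 - s₂))) := by
        field_simp
      rw [e1, e2] at h
      exact h
    rw [hs₃]
    exact le_trans step1 step2'
  -- integrate
  have hint₃ := integrand_intble hρc ha₃ hab₃ hb₃
  have hint₁ := integrand_intble hρc ha₁ hab₁ hb₁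
  have hint₂ := integrand_intble hρc ha₂ hab₂ hb₂
  have hintR : IntervalIntegrable (fun r =>
      (θ^2 / l) * (ρ r / ((a₁ + r * (b₁ - a₁)) * (1 - (a₁ + r * (b₁ - a₁))))) +
      ((1 - θ)^2 / m) * (ρ r / ((a₂ + r * (b₂ - a₂)) * (1 - (a₂ + r * (b₂ - a₂))))))
      MeasureTheory.volume 0 1 :=
    ((hint₁.const_mul _).add (hint₂.const_mul _))
  have hmono := integral_mono_on (by norm_num : (0:ℝ) ≤ 1) hint₃ hintR hpt
  have hsplit : (∫ r in (0:ℝ)..1,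
      ((θ^2 / l) * (ρ r / ((a₁ + r * (b₁ - a₁)) * (1 - (a₁ + r * (b₁ - a₁))))) +
      ((1 - θ)^2 / m) * (ρ r / ((a₂ + r * (b₂ - a₂)) * (1 - (a₂ + r * (b₂ - a₂))))))) =
      (θ^2 / l) * A + ((1 - θ)^2 / m) * B := by
    rw [integral_add (hint₁.const_mul _) (hint₂.const_mul _),
      integral_const_mul, integral_const_mul]
    rfl
  have hMle : M ≤ (θ^2 / l) * A + ((1 - θ)^2 / m) * B := by
    rw [← hsplit]; exact hmono
  have hRval : (θ^2 / l) * A + ((1 - θ)^2 / m) * B = A * B / (l * B + m * A) := by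
    rw [hθ]; field_simp; ring
  rw [hRval] at hMle
  have hRpos : 0 < A * B / (l * B + m * A) := by positivity
  have := one_div_le_one_div_of_le hMpos hMle
  calc l / A + m / B = 1 / (A * B / (l * B + m * A)) := by
        rw [one_div_div]
        field_simp
    _ ≤ 1 / M := this


lemma Dkl_pos {p q : ℝ} (hp0 : 0 < p) (hp1 : p < 1) (hq0 : 0 < q) (hq1 : q < 1)
    (hne : p ≠ q) : 0 < Dkl p q := by
  have hp1' : (0:ℝ) < 1 - p := by linarith
  have hq1' : (0:ℝ) < 1 - q := by linarith
  have h1 : Real.log (q / p) < q / p - 1 := by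
    apply Real.log_lt_sub_one_of_pos (by positivity)
    intro h
    rw [div_eq_one_iff_eq hp0.ne'] at h
    exact hne h.symm
  have h2 : Real.log ((1 - q) / (1 - p)) < (1 - q) / (1 - p) - 1 := by
    apply Real.log_lt_sub_one_of_pos (by positivity)
    intro h
    rw [div_eq_one_iff_eq hp1'.ne'] at h
    exact hne (by linarith)
  rw [Real.log_div hq0.ne' hp0.ne'] at h1
  rw [Real.log_div hq1'.ne' hp1'.ne'] at h2
  have m1 := mul_lt_mul_of_pos_left h1 hp0
  have m2 := mul_lt_mul_of_pos_left h2 hp1'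
  have e1 : p * (q / p - 1) = q - p := by field_simp
  have e2 : (1 - p) * ((1 - q) / (1 - p) - 1) = p - q := by field_simp; ring
  rw [e1] at m1
  rw [e2] at m2
  rw [Dkl, Real.log_div hp0.ne' hq0.ne', Real.log_div hp1'.ne' hq1'.ne']
  nlinarith

lemma combo_lt_left {u v a b lo : ℝ} (h1 : lo < u) (h2 : lo < v)
    (ha : 0 ≤ a) (hb : 0 ≤ b) (hab : a + b = 1) : lo < a * u + b * v := by
  rcases eq_or_lt_of_le ha with h | h
  · have hb1 : b = 1 := by linarith
    rw [← h, hb1]; simpa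
  · have e : a * lo + b * lo = lo := by rw [← add_mul, hab, one_mul]
    nlinarith [mul_pos h (sub_pos.mpr h1), mul_nonneg hb (sub_pos.mpr h2).le, e]

lemma combo_lt_right {u v a b hi : ℝ} (h1 : u < hi) (h2 : v < hi)
    (ha : 0 ≤ a) (hb : 0 ≤ b) (hab : a + b = 1) : a * u + b * v < hi := by
  have := combo_lt_left (neg_lt_neg h1) (neg_lt_neg h2) ha hb hab
  nlinarith [this]

/-- Concavity of `c0 * (1/Jw ρ₁ x.2 x.1) + c1 * (1/Jw ρ₂ x.2 x.1)` on `{0 < q < p < 1}`. -/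
lemma concaveOn_side {c0 c1 : ℝ} (hc0 : 0 ≤ c0) (hc1 : 0 ≤ c1)
    {ρ₁ ρ₂ : ℝ → ℝ} (h1c : Continuous ρ₁) (h10 : ∀ r ∈ Icc (0:ℝ) 1, 0 ≤ ρ₁ r)
    (h1p : ∀ r ∈ Ioo (0:ℝ) 1, 0 < ρ₁ r)
    (h2c : Continuous ρ₂) (h20 : ∀ r ∈ Icc (0:ℝ) 1, 0 ≤ ρ₂ r)
    (h2p : ∀ r ∈ Ioo (0:ℝ) 1, 0 < ρ₂ r) :
    ConcaveOn ℝ {x : ℝ × ℝ | 0 < x.2 ∧ x.2 < x.1 ∧ x.1 < 1}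
      (fun x => c0 * (1 / Jw ρ₁ x.2 x.1) + c1 * (1 / Jw ρ₂ x.2 x.1)) := by
  constructor
  · rintro x ⟨hx1, hx2, hx3⟩ y ⟨hy1, hy2, hy3⟩ a b ha hb hab
    refine ⟨?_, ?_, ?_⟩ <;>
      simp only [Prod.fst_add, Prod.snd_add, Prod.smul_fst, Prod.smul_snd,
        smul_eq_mul, Set.mem_setOf_eq]
    · exact combo_lt_left hx1 hy1 ha hb hab
    · have h := combo_lt_left (sub_pos.mpr hx2) (sub_pos.mpr hy2) ha hb hab
      nlinarith [h]
    · exact combo_lt_right hx3 hy3 ha hb hab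
  · rintro x ⟨hx1, hx2, hx3⟩ y ⟨hy1, hy2, hy3⟩ a b ha hb hab
    have e1 : (a • x + b • y).1 = a * x.1 + b * y.1 := by
      simp [Prod.fst_add, Prod.smul_fst, smul_eq_mul]
    have e2 : (a • x + b • y).2 = a * x.2 + b * y.2 := by
      simp [Prod.snd_add, Prod.smul_snd, smul_eq_mul]
    have H1 := Jw_harm h1c h10 h1p hx1 hx2 hx3 hy1 hy2 hy3 ha hb hab
    have H2 := Jw_harm h2c h20 h2p hx1 hx2 hx3 hy1 hy2 hy3 ha hb hab
    have hJ := add_le_add (mul_le_mul_of_nonneg_left H1 hc0)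
      (mul_le_mul_of_nonneg_left H2 hc1)
    simp only [smul_eq_mul, e1, e2]
    calc a * (c0 * (1 / Jw ρ₁ x.2 x.1) + c1 * (1 / Jw ρ₂ x.2 x.1)) +
          b * (c0 * (1 / Jw ρ₁ y.2 y.1) + c1 * (1 / Jw ρ₂ y.2 y.1))
        = c0 * (a / Jw ρ₁ x.2 x.1 + b / Jw ρ₁ y.2 y.1) +
          c1 * (a / Jw ρ₂ x.2 x.1 + b / Jw ρ₂ y.2 y.1) := by ring
      _ ≤ c0 * (1 / Jw ρ₁ (a * x.2 + b * y.2) (a * x.1 + b * y.1)) +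
          c1 * (1 / Jw ρ₂ (a * x.2 + b * y.2) (a * x.1 + b * y.1)) := hJ

/-- Core: a function of the form `F / ℓ²` with `F` concave and `ℓ` positive linear
attains its min over a compact convex set with finitely many extreme points at one. -/
lemma core (K U : Set (ℝ × ℝ)) (hKU : K ⊆ U)
    (hKne : K.Nonempty) (hKcomp : IsCompact K) (hKconv : Convex ℝ K)
    (hKext : (Set.extremePoints ℝ K).Finite)
    (F Gf : ℝ × ℝ → ℝ) (L : (ℝ × ℝ) →ₗ[ℝ] ℝ)
    (hF : ConcaveOn ℝ U F)
    (hL : ∀ x ∈ U, 0 < L x)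
    (hrel : ∀ x ∈ U, Gf x * (L x)^2 = F x)
    (hG0 : ∀ x ∈ U, 0 ≤ Gf x) :
    ∃ z ∈ Set.extremePoints ℝ K, ∀ y ∈ K, Gf z ≤ Gf y := by
  have hKM : convexHull ℝ (Set.extremePoints ℝ K) = K := by
    have h1 := closure_convexHull_extremePoints hKcomp hKconv
    rwa [IsClosed.closure_eq (hKext.isCompact_convexHull (𝕜 := ℝ)).isClosed] at h1
  have hSne : (Set.extremePoints ℝ K).Nonempty := by
    rw [← convexHull_nonempty_iff (𝕜 := ℝ), hKM]; exact hKne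
  set S := hKext.toFinset with hS
  obtain ⟨z, hzS, hzmin⟩ := S.exists_min_image Gf (hKext.toFinset_nonempty.mpr hSne)
  have hzE : z ∈ Set.extremePoints ℝ K := hKext.mem_toFinset.mp hzS
  refine ⟨z, hzE, ?_⟩
  intro y hy
  have hSK : ∀ s ∈ S, s ∈ K := fun s hs =>
    extremePoints_subset (hKext.mem_toFinset.mp hs)
  have hzK : z ∈ K := hSK z hzS
  have hzU := hKU hzK
  have hyU := hKU hy
  have hyhull : y ∈ convexHull ℝ (↑S : Set (ℝ × ℝ)) := by
    rw [hS, hKext.coe_toFinset, hKM]; exact hy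
  rw [Finset.convexHull_eq] at hyhull
  obtain ⟨w, hw0, hw1, hwy⟩ := hyhull
  rw [Finset.centerMass_eq_of_sum_1 _ _ hw1] at hwy
  have hwy' : (∑ s ∈ S, w s • s) = y := by simpa using hwy
  set t := Gf z with ht
  have ht0 : 0 ≤ t := hG0 z hzU
  -- Jensen for F
  have hJ1 : ∑ s ∈ S, w s • F s ≤ F y := by
    rw [← hwy']
    exact hF.le_map_sum hw0 hw1 (fun i hi => hKU (hSK i hi))
  -- vertex bound
  have hFs : ∀ s ∈ S, t * (L s)^2 ≤ F s := by
    intro s hs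
    rw [← hrel s (hKU (hSK s hs))]
    exact mul_le_mul_of_nonneg_right (hzmin s hs) (sq_nonneg _)
  -- Jensen for squares
  have hsq : (∑ s ∈ S, w s • L s)^2 ≤ ∑ s ∈ S, w s • (L s)^2 := by
    have hcvx : ConvexOn ℝ Set.univ (fun x : ℝ => x ^ 2) :=
      Even.convexOn_pow (by norm_num)
    have h := hcvx.map_sum_le (t := S) (w := w) (p := fun s => L s)
      hw0 hw1 (fun _ _ => Set.mem_univ _)
    simpa using h
  have hLy : L y = ∑ s ∈ S, w s • L s := by
    rw [← hwy', map_sum]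
    simp [map_smul]
  have chain : t * (L y)^2 ≤ F y := by
    calc t * (L y)^2 ≤ t * ∑ s ∈ S, w s • (L s)^2 := by
          rw [hLy]; exact mul_le_mul_of_nonneg_left hsq ht0
      _ = ∑ s ∈ S, w s • (t * (L s)^2) := by
          rw [Finset.mul_sum]
          exact Finset.sum_congr rfl (fun s _ => by simp [smul_eq_mul]; ring)
      _ ≤ ∑ s ∈ S, w s • F s := by
          apply Finset.sum_le_sum
          intro s hs
          simp only [smul_eq_mul]
          exact mul_le_mul_of_nonneg_left (hFs s hs) (hw0 s hs)
      _ ≤ F y := hJ1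
  have hfin : t * (L y)^2 ≤ Gf y * (L y)^2 := by
    rw [hrel y hyU]; exact chain
  have hLy2 : 0 < (L y)^2 := pow_pos (hL y hyU) 2
  exact le_of_mul_le_mul_right hfin hLy2


/-- Concavity of `c0 * (1/Jw ρ₁ x.1 x.2) + c1 * (1/Jw ρ₂ x.1 x.2)` on `{0 < q < p < 1}`. -/
lemma concaveOn_side' {c0 c1 : ℝ} (hc0 : 0 ≤ c0) (hc1 : 0 ≤ c1)
    {ρ₁ ρ₂ : ℝ → ℝ} (h1c : Continuous ρ₁) (h10 : ∀ r ∈ Icc (0:ℝ) 1, 0 ≤ ρ₁ r)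
    (h1p : ∀ r ∈ Ioo (0:ℝ) 1, 0 < ρ₁ r)
    (h2c : Continuous ρ₂) (h20 : ∀ r ∈ Icc (0:ℝ) 1, 0 ≤ ρ₂ r)
    (h2p : ∀ r ∈ Ioo (0:ℝ) 1, 0 < ρ₂ r) :
    ConcaveOn ℝ {x : ℝ × ℝ | 0 < x.1 ∧ x.1 < x.2 ∧ x.2 < 1}
      (fun x => c0 * (1 / Jw ρ₁ x.1 x.2) + c1 * (1 / Jw ρ₂ x.1 x.2)) := by
  constructor
  · rintro x ⟨hx1, hx2, hx3⟩ y ⟨hy1, hy2, hy3⟩ a b ha hb hab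
    refine ⟨?_, ?_, ?_⟩ <;>
      simp only [Prod.snd_add, Prod.fst_add, Prod.smul_snd, Prod.smul_fst,
        smul_eq_mul, Set.mem_setOf_eq]
    · exact combo_lt_left hx1 hy1 ha hb hab
    · have h := combo_lt_left (sub_pos.mpr hx2) (sub_pos.mpr hy2) ha hb hab
      nlinarith [h]
    · exact combo_lt_right hx3 hy3 ha hb hab
  · rintro x ⟨hx1, hx2, hx3⟩ y ⟨hy1, hy2, hy3⟩ a b ha hb hab
    have e1 : (a • x + b • y).2 = a * x.2 + b * y.2 := by
      simp [Prod.snd_add, Prod.smul_snd, smul_eq_mul]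
    have e2 : (a • x + b • y).1 = a * x.1 + b * y.1 := by
      simp [Prod.fst_add, Prod.smul_fst, smul_eq_mul]
    have H1 := Jw_harm h1c h10 h1p hx1 hx2 hx3 hy1 hy2 hy3 ha hb hab
    have H2 := Jw_harm h2c h20 h2p hx1 hx2 hx3 hy1 hy2 hy3 ha hb hab
    have hJ := add_le_add (mul_le_mul_of_nonneg_left H1 hc0)
      (mul_le_mul_of_nonneg_left H2 hc1)
    simp only [smul_eq_mul, e1, e2]
    calc a * (c0 * (1 / Jw ρ₁ x.1 x.2) + c1 * (1 / Jw ρ₂ x.1 x.2)) +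
          b * (c0 * (1 / Jw ρ₁ y.1 y.2) + c1 * (1 / Jw ρ₂ y.1 y.2))
        = c0 * (a / Jw ρ₁ x.1 x.2 + b / Jw ρ₁ y.1 y.2) +
          c1 * (a / Jw ρ₂ x.1 x.2 + b / Jw ρ₂ y.1 y.2) := by ring
      _ ≤ c0 * (1 / Jw ρ₁ (a * x.1 + b * y.1) (a * x.2 + b * y.2)) +
          c1 * (1 / Jw ρ₂ (a * x.1 + b * y.1) (a * x.2 + b * y.2)) := hJ


end Stmt17

open Stmt17 in
theorem stmt_17 (c0 c1 : ℝ) (hc0 : 0 ≤ c0) (hc1 : 0 ≤ c1)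
    (K : Set (ℝ × ℝ)) (hKne : K.Nonempty)
    (hKsub : K ⊆ {p : ℝ × ℝ | p ∈ Set.Ioo (0:ℝ) 1 ×ˢ Set.Ioo (0:ℝ) 1 ∧ p.1 ≠ p.2})
    (hKcomp : IsCompact K) (hKconv : Convex ℝ K)
    (hKext : (Set.extremePoints ℝ K).Finite) :
    ∃ z ∈ Set.extremePoints ℝ K, ∀ y ∈ K,
      (c0 / (z.1 * Real.log (z.1 / z.2) +
               (1 - z.1) * Real.log ((1 - z.1) / (1 - z.2))) +
       c1 / (z.2 * Real.log (z.2 / z.1) +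
               (1 - z.2) * Real.log ((1 - z.2) / (1 - z.1)))) ≤
      (c0 / (y.1 * Real.log (y.1 / y.2) +
               (1 - y.1) * Real.log ((1 - y.1) / (1 - y.2))) +
       c1 / (y.2 * Real.log (y.2 / y.1) +
               (1 - y.2) * Real.log ((1 - y.2) / (1 - y.1)))) := by
  classical
  have hK' : ∀ x ∈ K, 0 < x.1 ∧ x.1 < 1 ∧ 0 < x.2 ∧ x.2 < 1 ∧ x.1 ≠ x.2 := by
    intro x hx
    obtain ⟨⟨h1, h2⟩, hne⟩ := hKsub hx
    exact ⟨h1.1, h1.2, h2.1, h2.2, hne⟩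
  -- K lies strictly on one side of the diagonal
  have hside : (∀ x ∈ K, x.2 < x.1) ∨ (∀ x ∈ K, x.1 < x.2) := by
    by_contra h
    push_neg at h
    obtain ⟨⟨x, hx, hx2⟩, ⟨y, hy, hy2⟩⟩ := h
    have hxlt : x.1 < x.2 := lt_of_le_of_ne hx2 (hK' x hx).2.2.2.2
    have hylt : y.2 < y.1 := lt_of_le_of_ne hy2 fun h' => (hK' y hy).2.2.2.2 h'.symm
    have hcont : ContinuousOn (fun θ : ℝ => (1 - θ) * (x.1 - x.2) + θ * (y.1 - y.2))
        (Icc 0 1) := by fun_prop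
    have hmem : (0:ℝ) ∈ Icc ((1 - (0:ℝ)) * (x.1 - x.2) + (0:ℝ) * (y.1 - y.2))
        ((1 - (1:ℝ)) * (x.1 - x.2) + (1:ℝ) * (y.1 - y.2)) := by
      constructor <;> simp <;> linarith
    obtain ⟨θ, hθ, hfθ⟩ := intermediate_value_Icc (by norm_num : (0:ℝ) ≤ 1) hcont hmem
    have hθ0 : 0 ≤ θ := hθ.1
    have hθ1 : θ ≤ 1 := hθ.2
    have hzK : (1 - θ) • x + θ • y ∈ K :=
      hKconv hx hy (by linarith) hθ0 (by ring)
    apply (hK' _ hzK).2.2.2.2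
    have e1 : ((1 - θ) • x + θ • y).1 = (1 - θ) * x.1 + θ * y.1 := rfl
    have e2 : ((1 - θ) • x + θ • y).2 = (1 - θ) * x.2 + θ * y.2 := rfl
    rw [e1, e2]
    linear_combination hfθ
  set ρ₁ : ℝ → ℝ := fun r => 1 - r with hρ₁
  set ρ₂ : ℝ → ℝ := fun r => r with hρ₂
  have h1c : Continuous ρ₁ := by fun_prop
  have h2c : Continuous ρ₂ := by fun_prop
  have h10 : ∀ r ∈ Icc (0:ℝ) 1, 0 ≤ ρ₁ r := fun r hr => by
    simp only [hρ₁]; linarith [hr.2]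
  have h1p : ∀ r ∈ Ioo (0:ℝ) 1, 0 < ρ₁ r := fun r hr => by
    simp only [hρ₁]; linarith [hr.2]
  have h20 : ∀ r ∈ Icc (0:ℝ) 1, 0 ≤ ρ₂ r := fun r hr => hr.1
  have h2p : ∀ r ∈ Ioo (0:ℝ) 1, 0 < ρ₂ r := fun r hr => hr.1
  rcases hside with hs | hs
  · -- case p > q on K
    have hKU : K ⊆ {x : ℝ × ℝ | 0 < x.2 ∧ x.2 < x.1 ∧ x.1 < 1} := fun x hx =>
      ⟨(hK' x hx).2.2.1, hs x hx, (hK' x hx).2.1⟩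
    have hres := core K _ hKU hKne hKcomp hKconv hKext
      (fun x => c0 * (1 / Jw ρ₁ x.2 x.1) + c1 * (1 / Jw ρ₂ x.2 x.1))
      (fun y => c0 / Dkl y.1 y.2 + c1 / Dkl y.2 y.1)
      (LinearMap.fst ℝ ℝ ℝ - LinearMap.snd ℝ ℝ ℝ)
      (concaveOn_side hc0 hc1 h1c h10 h1p h2c h20 h2p)
      (fun x hx => sub_pos.mpr hx.2.1)
      ?hrel ?hG0
    · obtain ⟨z, hzE, hzmin⟩ := hres
      exact ⟨z, hzE, fun y hy => hzmin y hy⟩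
    case hrel =>
      intro x hx
      obtain ⟨hq0, hqp, hp1⟩ := hx
      have id1 := Dkl_eq_Jw_one_sub hq0 hqp hp1
      have id2 := Dkl_eq_Jw_id hq0 hqp hp1
      have hJ1 := Jw_pos h1c h1p hq0 hqp hp1
      have hJ2 := Jw_pos h2c h2p hq0 hqp hp1
      have hd : (0:ℝ) < x.1 - x.2 := sub_pos.mpr hqp
      show (c0 / Dkl x.1 x.2 + c1 / Dkl x.2 x.1) * (x.1 - x.2)^2 =
        c0 * (1 / Jw ρ₁ x.2 x.1) + c1 * (1 / Jw ρ₂ x.2 x.1)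
      rw [id1, id2]
      simp only [hρ₁, hρ₂] at hJ1 hJ2 ⊢
      field_simp
    case hG0 =>
      intro x hx
      obtain ⟨hq0, hqp, hp1⟩ := hx
      have hq1 : x.2 < 1 := lt_trans hqp hp1
      have hp0 : 0 < x.1 := lt_trans hq0 hqp
      have hD1 := Dkl_pos hp0 hp1 hq0 hq1 (ne_of_gt hqp)
      have hD2 := Dkl_pos hq0 hq1 hp0 hp1 (ne_of_lt hqp)
      exact add_nonneg (div_nonneg hc0 hD1.le) (div_nonneg hc1 hD2.le)
  · -- case p < q on K
    have hKU : K ⊆ {x : ℝ × ℝ | 0 < x.1 ∧ x.1 < x.2 ∧ x.2 < 1} := fun x hx =>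
      ⟨(hK' x hx).1, hs x hx, (hK' x hx).2.2.2.1⟩
    have hres := core K _ hKU hKne hKcomp hKconv hKext
      (fun x => c0 * (1 / Jw ρ₂ x.1 x.2) + c1 * (1 / Jw ρ₁ x.1 x.2))
      (fun y => c0 / Dkl y.1 y.2 + c1 / Dkl y.2 y.1)
      (LinearMap.snd ℝ ℝ ℝ - LinearMap.fst ℝ ℝ ℝ)
      (concaveOn_side' hc0 hc1 h2c h20 h2p h1c h10 h1p)
      (fun x hx => sub_pos.mpr hx.2.1)
      ?hrel ?hG0
    · obtain ⟨z, hzE, hzmin⟩ := hres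
      exact ⟨z, hzE, fun y hy => hzmin y hy⟩
    case hrel =>
      intro x hx
      obtain ⟨hp0, hpq, hq1⟩ := hx
      have id1 := Dkl_eq_Jw_id hp0 hpq hq1          -- Dkl x.1 x.2 = (x.2-x.1)^2 * Jw ρ₂ x.1 x.2
      have id2 := Dkl_eq_Jw_one_sub hp0 hpq hq1     -- Dkl x.2 x.1 = (x.2-x.1)^2 * Jw ρ₁ x.1 x.2
      have hJ1 := Jw_pos h2c h2p hp0 hpq hq1
      have hJ2 := Jw_pos h1c h1p hp0 hpq hq1
      have hd : (0:ℝ) < x.2 - x.1 := sub_pos.mpr hpq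
      show (c0 / Dkl x.1 x.2 + c1 / Dkl x.2 x.1) * (x.2 - x.1)^2 =
        c0 * (1 / Jw ρ₂ x.1 x.2) + c1 * (1 / Jw ρ₁ x.1 x.2)
      rw [id1, id2]
      simp only [hρ₁, hρ₂] at hJ1 hJ2 ⊢
      field_simp
    case hG0 =>
      intro x hx
      obtain ⟨hp0, hpq, hq1⟩ := hx
      have hp1 : x.1 < 1 := lt_trans hpq hq1
      have hq0 : 0 < x.2 := lt_trans hp0 hpq
      have hD1 := Dkl_pos hp0 hp1 hq0 hq1 (ne_of_lt hpq)
      have hD2 := Dkl_pos hq0 hq1 hp0 hp1 (ne_of_gt hpq)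
      exact add_nonneg (div_nonneg hc0 hD1.le) (div_nonneg hc1 hD2.le)
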